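/- Let N ≥ 1, p > 1, b + 1 - a > 0, S = (N - 1 - (p-1)a - b)/p > 0, c = ((p-1)a + b + 1)/p, and for k ∈ ℝ, λ > 0 set v(k,λ)(x) = k·C₁·λ^(S/(b+1-a))·exp(-λ|x|^(b+1-a)/(b+1-a)), where C₁ is chosen so that ‖v(1,1)‖_{L^p_c} = 1. Then ‖v(k,λ)‖_{L^p_a} = |k|·(S/λ)^(1/p), where ‖u‖_{L^p_a} = (∫_{ℝ^N}|x|^{-pa}|u|^p dx)^(1/p). -/

import Mathlib

open MeasureTheory

open MeasureTheory Real Set in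
lemma radial_integral (N : ℕ) (hN : 1 ≤ N) (e t m : ℝ) (hm : 0 < m) (ht : 0 < t)
    (he : -1 < (N:ℝ) - 1 + e) :
    ∫ x : EuclideanSpace ℝ (Fin N), ‖x‖ ^ e * Real.exp (-(t * ‖x‖ ^ m)) =
      ((N : ℝ) * (volume (Metric.ball (0:EuclideanSpace ℝ (Fin N)) 1)).toReal) *
        (t ^ (-((N:ℝ) + e) / m) * (1 / m) * Real.Gamma (((N:ℝ) + e) / m)) := by
  haveI : Nontrivial (EuclideanSpace ℝ (Fin N)) :=
    Module.nontrivial_of_finrank_pos (R := ℝ) (by rw [finrank_euclideanSpace_fin]; omega)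
  rw [integral_fun_norm_addHaar volume (fun r : ℝ => r ^ e * Real.exp (-(t * r ^ m)))]
  have hdim : Module.finrank ℝ (EuclideanSpace ℝ (Fin N)) = N := finrank_euclideanSpace_fin
  rw [hdim, nsmul_eq_mul, smul_eq_mul]
  have h1 : ∫ y in Ioi (0:ℝ), y ^ (N - 1) • (y ^ e * Real.exp (-(t * y ^ m)))
      = ∫ y in Ioi (0:ℝ), y ^ ((N:ℝ) - 1 + e) * Real.exp (-t * y ^ m) := by
    refine setIntegral_congr_fun measurableSet_Ioi (fun y hy => ?_)
    have hy : (0:ℝ) < y := hy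
    rw [smul_eq_mul, ← Real.rpow_natCast y (N - 1), Nat.cast_sub hN, Nat.cast_one,
      ← mul_assoc, ← Real.rpow_add hy, neg_mul]
  rw [h1, integral_rpow_mul_exp_neg_mul_rpow hm he ht]
  have h2 : (N:ℝ) - 1 + e + 1 = (N:ℝ) + e := by ring
  rw [h2]
  rw [measureReal_def]
  ring

theorem Lpa_norm_of_minimizer (N : ℕ) (hN : 1 ≤ N) (p a b k lam S c C₁ : ℝ)
    (hp : 1 < p) (hba : 0 < b + 1 - a) (hlam : 0 < lam)
    (hS : S = ((N:ℝ) - 1 - (p - 1) * a - b) / p) (hSpos : 0 < S)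
    (hc : c = ((p - 1) * a + b + 1) / p)
    (hC₁ : C₁ = (∫ x : EuclideanSpace ℝ (Fin N),
        ‖x‖ ^ (-(p * c)) * Real.exp (-(p * ‖x‖ ^ (b + 1 - a) / (b + 1 - a)))) ^ (-(1:ℝ)/p)) :
    (∫ x : EuclideanSpace ℝ (Fin N),
        ‖x‖ ^ (-(p * a)) *
          |k * C₁ * lam ^ (S / (b + 1 - a)) *
            Real.exp (-(lam * ‖x‖ ^ (b + 1 - a) / (b + 1 - a)))| ^ p) ^ (1/p)
      = |k| * (S / lam) ^ (1/p) := by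
  have hm : 0 < b + 1 - a := hba
  have hp0 : 0 < p := lt_trans one_pos hp
  have hpc : p * c = p * a + (b + 1 - a) := by rw [hc]; field_simp; ring
  have hpS : p * S = (N:ℝ) - p * c := by
    rw [hS, hc]; field_simp; ring
  have hpSpos : 0 < p * S := mul_pos hp0 hSpos
  set K := ((N:ℝ) * (volume (Metric.ball (0:EuclideanSpace ℝ (Fin N)) 1)).toReal) with hKdef
  have hKpos : 0 < K := by
    refine mul_pos (by exact_mod_cast Nat.lt_of_lt_of_le Nat.zero_lt_one hN) ?_
    exact ENNReal.toReal_pos (Metric.measure_ball_pos _ _ one_pos).ne' measure_ball_lt_top.ne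
  have hX : 0 < p / (b + 1 - a) := div_pos hp0 hm
  set G := Real.Gamma (p * S / (b + 1 - a)) with hGdef
  have hG : 0 < G := Real.Gamma_pos_of_pos (div_pos hpSpos hm)
  -- the normalization integral
  have hJ : (∫ x : EuclideanSpace ℝ (Fin N),
        ‖x‖ ^ (-(p * c)) * Real.exp (-(p * ‖x‖ ^ (b + 1 - a) / (b + 1 - a))))
      = K * ((p / (b + 1 - a)) ^ (-(p * S) / (b + 1 - a)) * (1 / (b + 1 - a)) * G) := by
    have h := radial_integral N hN (-(p * c)) (p / (b + 1 - a)) (b + 1 - a) hm hX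
      (by rw [hpc] at hpS; linarith)
    have harg : (∫ x : EuclideanSpace ℝ (Fin N),
          ‖x‖ ^ (-(p * c)) * Real.exp (-(p * ‖x‖ ^ (b + 1 - a) / (b + 1 - a))))
        = ∫ x : EuclideanSpace ℝ (Fin N),
          ‖x‖ ^ (-(p * c)) * Real.exp (-(p / (b + 1 - a) * ‖x‖ ^ (b + 1 - a))) := by
      congr 1; funext x; congr 2; ring
    rw [harg, h, show (N:ℝ) + -(p * c) = p * S from by linarith]
  have hJpos : 0 < (∫ x : EuclideanSpace ℝ (Fin N),
        ‖x‖ ^ (-(p * c)) * Real.exp (-(p * ‖x‖ ^ (b + 1 - a) / (b + 1 - a)))) := by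
    rw [hJ]
    have := Real.rpow_pos_of_pos hX (-(p * S) / (b + 1 - a))
    positivity
  have hC₁pos : 0 < C₁ := by rw [hC₁]; exact Real.rpow_pos_of_pos hJpos _
  have hC₁p : C₁ ^ p = (K * ((p / (b + 1 - a)) ^ (-(p * S) / (b + 1 - a)) *
      (1 / (b + 1 - a)) * G))⁻¹ := by
    rw [hC₁, ← Real.rpow_mul hJpos.le, neg_div, neg_mul, one_div,
      inv_mul_cancel₀ hp0.ne', Real.rpow_neg_one, hJ]
  -- the main radial integral
  have hNa : (N:ℝ) + -(p * a) = p * S + (b + 1 - a) := by rw [hpc] at hpS; linarith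
  have hI : (∫ x : EuclideanSpace ℝ (Fin N),
        ‖x‖ ^ (-(p * a)) * Real.exp (-(p * lam / (b + 1 - a) * ‖x‖ ^ (b + 1 - a))))
      = K * ((p * lam / (b + 1 - a)) ^ (-(p * S + (b + 1 - a)) / (b + 1 - a)) *
          (1 / (b + 1 - a)) * ((p * S / (b + 1 - a)) * G)) := by
    have h := radial_integral N hN (-(p * a)) (p * lam / (b + 1 - a)) (b + 1 - a) hm
      (div_pos (mul_pos hp0 hlam) hm) (by nlinarith)
    rw [h, hNa]
    congr 2
    rw [show (p * S + (b + 1 - a)) / (b + 1 - a) = p * S / (b + 1 - a) + 1 from by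
      field_simp, Real.Gamma_add_one (div_pos hpSpos hm).ne', hGdef]
  -- pointwise simplification of the integrand
  have habs : ∀ x : EuclideanSpace ℝ (Fin N),
      ‖x‖ ^ (-(p * a)) * |k * C₁ * lam ^ (S / (b + 1 - a)) *
          Real.exp (-(lam * ‖x‖ ^ (b + 1 - a) / (b + 1 - a)))| ^ p
      = (|k| ^ p * C₁ ^ p * lam ^ (p * S / (b + 1 - a))) *
          (‖x‖ ^ (-(p * a)) * Real.exp (-(p * lam / (b + 1 - a) * ‖x‖ ^ (b + 1 - a)))) := by
    intro x
    rw [abs_mul, abs_mul, abs_mul, abs_of_pos hC₁pos,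
      abs_of_pos (Real.rpow_pos_of_pos hlam _), abs_of_pos (Real.exp_pos _),
      Real.mul_rpow (by positivity) (Real.exp_pos _).le,
      Real.mul_rpow (by positivity) (Real.rpow_pos_of_pos hlam _).le,
      Real.mul_rpow (abs_nonneg k) hC₁pos.le,
      ← Real.rpow_mul hlam.le, ← Real.exp_mul,
      show S / (b + 1 - a) * p = p * S / (b + 1 - a) from by ring,
      show -(lam * ‖x‖ ^ (b + 1 - a) / (b + 1 - a)) * p
        = -(p * lam / (b + 1 - a) * ‖x‖ ^ (b + 1 - a)) from by ring]
    ring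
  simp only [habs]
  rw [integral_const_mul, hI, hC₁p]
  -- now pure rpow algebra
  have hL1 : lam ^ (p * S / (b + 1 - a)) ≠ 0 := (Real.rpow_pos_of_pos hlam _).ne'
  have e1 : (p * lam / (b + 1 - a)) ^ (-(p * S + (b + 1 - a)) / (b + 1 - a))
      = (p / (b + 1 - a)) ^ (-(p * S + (b + 1 - a)) / (b + 1 - a)) *
        (lam ^ (p * S / (b + 1 - a)) * lam)⁻¹ := by
    rw [show p * lam / (b + 1 - a) = (p / (b + 1 - a)) * lam from by ring,
      Real.mul_rpow hX.le hlam.le]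
    congr 1
    rw [show -(p * S + (b + 1 - a)) / (b + 1 - a) = -(p * S / (b + 1 - a) + 1) from by
      field_simp, Real.rpow_neg hlam.le, Real.rpow_add_one hlam.ne']
  have e2 : (p / (b + 1 - a)) ^ (-(p * S) / (b + 1 - a))
      = (p / (b + 1 - a)) ^ (-(p * S + (b + 1 - a)) / (b + 1 - a)) * (p / (b + 1 - a)) := by
    rw [show -(p * S) / (b + 1 - a) = -(p * S + (b + 1 - a)) / (b + 1 - a) + 1 from by
      field_simp; ring, Real.rpow_add_one hX.ne']
  have hY : (p / (b + 1 - a)) ^ (-(p * S + (b + 1 - a)) / (b + 1 - a)) ≠ 0 :=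
    (Real.rpow_pos_of_pos hX _).ne'
  have key : |k| ^ p * (K * ((p / (b + 1 - a)) ^ (-(p * S) / (b + 1 - a)) *
        (1 / (b + 1 - a)) * G))⁻¹ * lam ^ (p * S / (b + 1 - a)) *
      (K * ((p * lam / (b + 1 - a)) ^ (-(p * S + (b + 1 - a)) / (b + 1 - a)) *
        (1 / (b + 1 - a)) * (p * S / (b + 1 - a) * G)))
      = |k| ^ p * (S / lam) := by
    rw [e1, e2]
    field_simp
  calc (|k| ^ p * (K * ((p / (b + 1 - a)) ^ (-(p * S) / (b + 1 - a)) *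
        (1 / (b + 1 - a)) * G))⁻¹ * lam ^ (p * S / (b + 1 - a)) *
      (K * ((p * lam / (b + 1 - a)) ^ (-(p * S + (b + 1 - a)) / (b + 1 - a)) *
        (1 / (b + 1 - a)) * (p * S / (b + 1 - a) * G)))) ^ (1/p)
      = (|k| ^ p * (S / lam)) ^ (1/p) := by rw [key]
    _ = |k| * (S / lam) ^ (1/p) := by
        rw [Real.mul_rpow (by positivity) (by positivity),
          ← Real.rpow_mul (abs_nonneg k), mul_one_div_cancel hp0.ne', Real.rpow_one]
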